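/- Let H = (S_{r_1})^{d_1} × … × (S_{r_n})^{d_n} ≤ S_N (with N = Σ d_i r_i) act on T = {(i,j,k)}, and τ(i,j,k) = (i,j,k+1) as above. The expected number of k-cycles of a uniformly random element of the coset τH equals (1/k) · Σ_{i : d_i | k and d_i r_i ≥ k} d_i. -/

import Mathlib

/-- `cycleCount σ k` is the number of `k`-cycles of `σ` (with `1`-cycles = fixed points). -/
def cycleCount {α : Type*} [Fintype α] [DecidableEq α] (σ : Equiv.Perm α) (k : ℕ) : ℕ :=
  if k = 1 then (Finset.univ.filter fun x => σ x = x).card else Multiset.count k σ.cycleType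

/-- The permutation of the grid `{1,…,r} × Z/dZ` acting by `h k` on the fiber over `k`. -/
def gridPerm (r d : ℕ) (h : Fin d → Equiv.Perm (Fin r)) : Equiv.Perm (Fin r × Fin d) where
  toFun p := (h p.2 p.1, p.2)
  invFun p := ((h p.2).symm p.1, p.2)
  left_inv p := by simp
  right_inv p := by simp

/-- The cyclic shift `τ(j,k) = (j,k+1)` of the grid. -/
def tauGrid (r d : ℕ) : Equiv.Perm (Fin r × Fin d) :=
  (Equiv.refl (Fin r)).prodCongr (finRotate d)

/-- The descending product `m_i(h) = h_{i,d_i} ⋯ h_{i,1} ∈ S_{r_i}` (applying `h_{i,0}` first). -/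
def mComp {r d : ℕ} (h : Fin d → Equiv.Perm (Fin r)) : Equiv.Perm (Fin r) :=
  ((List.ofFn h).reverse).prod

/-- The Young-type group `H = ∏ᵢ (S_{rᵢ})^{dᵢ}`. -/
abbrev BigH (n : ℕ) (r d : Fin n → ℕ) := ∀ i : Fin n, Fin (d i) → Equiv.Perm (Fin (r i))

/-- The action of `h ∈ H` on `T = ⨿ᵢ Fin(rᵢ) × Z/dᵢZ`, permuting `j`-coordinates. -/
def hPermBig {n : ℕ} {r d : Fin n → ℕ} (h : BigH n r d) :
    Equiv.Perm (Σ i : Fin n, Fin (r i) × Fin (d i)) :=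
  Equiv.sigmaCongrRight fun i => gridPerm (r i) (d i) (h i)

/-- The permutation `τ(i,j,k) = (i,j,k+1)` of `T`. -/
def tauBig (n : ℕ) (r d : Fin n → ℕ) : Equiv.Perm (Σ i : Fin n, Fin (r i) × Fin (d i)) :=
  Equiv.sigmaCongrRight fun i => tauGrid (r i) (d i)



section Aux
open Equiv Function Finset
open Fin.NatCast Fin.CommRing
set_option linter.unusedSectionVars false
variable {α : Type*} [Fintype α] [DecidableEq α]

lemma perm_mem_periodicPts (σ : Perm α) (x : α) : x ∈ periodicPts ⇑σ :=
  ⟨orderOf σ, orderOf_pos σ, by simp [IsPeriodicPt, IsFixedPt, ← Equiv.Perm.coe_pow, pow_orderOf_eq_one]⟩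

lemma perm_mp_pos (σ : Perm α) (x : α) : 0 < minimalPeriod ⇑σ x :=
  minimalPeriod_pos_of_mem_periodicPts (perm_mem_periodicPts σ x)

lemma mp_eq_card_support_cycleOf (σ : Perm α) (x : α) (hx : σ x ≠ x) :
    minimalPeriod ⇑σ x = (σ.cycleOf x).support.card := by
  have hmem : x ∈ (σ.cycleOf x).support := by
    rw [Equiv.Perm.mem_support_cycleOf_iff]
    exact ⟨Equiv.Perm.SameCycle.refl _ _, Equiv.Perm.mem_support.2 hx⟩
  have hc : (σ.cycleOf x).IsCycle := Equiv.Perm.isCycle_cycleOf σ hx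
  have hiter : ∀ m : ℕ, IsPeriodicPt ⇑σ m x ↔ IsPeriodicPt ⇑(σ.cycleOf x) m x := by
    intro m
    simp only [IsPeriodicPt, IsFixedPt, ← Equiv.Perm.coe_pow]
    rw [Equiv.Perm.cycleOf_pow_apply_self]
  have h1 : minimalPeriod ⇑σ x = minimalPeriod ⇑(σ.cycleOf x) x := by
    apply Nat.dvd_antisymm
    · exact ((hiter _).2 (isPeriodicPt_minimalPeriod _ _)).minimalPeriod_dvd
    · exact ((hiter _).1 (isPeriodicPt_minimalPeriod _ _)).minimalPeriod_dvd
  rw [h1, ← hc.orderOf]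
  apply Nat.dvd_antisymm
  · apply IsPeriodicPt.minimalPeriod_dvd
    simp [IsPeriodicPt, IsFixedPt, ← Equiv.Perm.coe_pow, pow_orderOf_eq_one]
  · rw [orderOf_dvd_iff_pow_eq_one, hc.pow_eq_one_iff' (Equiv.Perm.mem_support.1 hmem)]
    exact isPeriodicPt_minimalPeriod ⇑(σ.cycleOf x) x

lemma mp_le_card (σ : Perm α) (x : α) : minimalPeriod ⇑σ x ≤ Fintype.card α := by
  by_cases hx : σ x = x
  · have : minimalPeriod ⇑σ x = 1 := minimalPeriod_eq_one_iff_isFixedPt.2 hx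
    rw [this]
    have : 0 < Fintype.card α := Fintype.card_pos_iff.2 ⟨x⟩
    omega
  · rw [mp_eq_card_support_cycleOf σ x hx]
    exact (Finset.card_le_univ _).trans (by simp)

noncomputable def pcount {α : Type*} [Fintype α] [DecidableEq α] (σ : Equiv.Perm α) (k : ℕ) : ℕ :=
  (Finset.univ.filter fun x => minimalPeriod ⇑σ x = k).card

lemma pcount_eq_mul_cycleCount (σ : Perm α) (k : ℕ) (hk : 1 ≤ k) :
    pcount σ k = k * cycleCount σ k := by
  rcases eq_or_lt_of_le hk with h1 | h2
  · unfold pcount cycleCount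
    rw [← h1, if_pos rfl, one_mul]
    congr 1
    ext x
    simp [minimalPeriod_eq_one_iff_isFixedPt, IsFixedPt]
  · -- k ≥ 2
    have hk1 : k ≠ 1 := by omega
    unfold pcount cycleCount
    rw [if_neg hk1]
    -- RHS: count in cycleType
    have hset : Finset.univ.filter (fun x => minimalPeriod ⇑σ x = k)
        = (σ.cycleFactorsFinset.filter fun c => c.support.card = k).biUnion
            (fun c => c.support) := by
      ext x
      simp only [mem_filter, mem_univ, true_and, mem_biUnion]
      constructor
      · intro hmp
        have hx : σ x ≠ x := by
          intro hfix
          rw [minimalPeriod_eq_one_iff_isFixedPt.2 hfix] at hmp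
          omega
        refine ⟨σ.cycleOf x, ⟨?_, ?_⟩, ?_⟩
        · exact Equiv.Perm.cycleOf_mem_cycleFactorsFinset_iff.2 (Equiv.Perm.mem_support.2 hx)
        · rw [← mp_eq_card_support_cycleOf σ x hx]; exact hmp
        · rw [Equiv.Perm.mem_support_cycleOf_iff]
          exact ⟨Equiv.Perm.SameCycle.refl _ _, Equiv.Perm.mem_support.2 hx⟩
      · rintro ⟨c, ⟨hcf, hcard⟩, hxc⟩
        have hceq : c = σ.cycleOf x := Equiv.Perm.cycle_is_cycleOf hxc hcf
        have hx : σ x ≠ x := by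
          have h1 := (Equiv.Perm.mem_cycleFactorsFinset_iff.1 hcf).2 x hxc
          have h2 := Equiv.Perm.mem_support.1 hxc
          rw [h1] at h2; exact h2
        rw [mp_eq_card_support_cycleOf σ x hx, ← hceq]; exact hcard
    rw [hset, Finset.card_biUnion]
    · rw [Finset.sum_congr rfl (fun c hc => (mem_filter.1 hc).2)]
      rw [Finset.sum_const, smul_eq_mul, mul_comm]
      congr 1
      -- count k cycleType = number of cycle factors with support card k
      rw [Equiv.Perm.cycleType]
      rw [Multiset.count_map]
      rw [Finset.card, Finset.filter_val]
      congr 1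
      apply Multiset.filter_congr
      intro c _
      simp [eq_comm]
    · intro c hc c' hc' hne
      exact Equiv.Perm.Disjoint.disjoint_support
        ((σ.cycleFactorsFinset_pairwise_disjoint) (mem_filter.1 hc).1 (mem_filter.1 hc').1 hne)

def ringProd {r d : ℕ} [NeZero d] (h : Fin d → Equiv.Perm (Fin r)) (c : Fin d) :
    ℕ → Equiv.Perm (Fin r)
  | 0 => 1
  | (m+1) => h (c + (m : Fin d)) * ringProd h c m

lemma grid_apply {r d' : ℕ} (h : Fin (d'+1) → Equiv.Perm (Fin r)) (p : Fin r × Fin (d'+1)) :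
    (tauGrid r (d'+1) * gridPerm r (d'+1) h) p = (h p.2 p.1, p.2 + 1) := by
  cases p
  simp [tauGrid, gridPerm, Equiv.Perm.mul_apply, finRotate_succ_apply]

lemma grid_iterate {r d' : ℕ} (h : Fin (d'+1) → Equiv.Perm (Fin r)) (j : Fin r) (c : Fin (d'+1))
    (m : ℕ) :
    (⇑(tauGrid r (d'+1) * gridPerm r (d'+1) h))^[m] (j, c) = (ringProd h c m j, c + (m : Fin (d'+1))) := by
  induction m with
  | zero => simp [ringProd]
  | succ m ih =>
    rw [Function.iterate_succ_apply', ih, grid_apply]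
    simp only [ringProd, Equiv.Perm.mul_apply]
    congr 1
    push_cast
    ring

lemma ringProd_add {r d : ℕ} [NeZero d] (h : Fin d → Equiv.Perm (Fin r)) (c : Fin d)
    (s t : ℕ) : ringProd h c (s + t) = ringProd h (c + (s : Fin d)) t * ringProd h c s := by
  induction t with
  | zero => simp [ringProd]
  | succ t ih =>
    show ringProd h c (s + t + 1) = _
    rw [show s + t + 1 = (s+t) + 1 from rfl]
    simp only [ringProd, ih]
    rw [mul_assoc]
    congr 2
    push_cast
    ring

lemma ringProd_mul {r d : ℕ} [NeZero d] (h : Fin d → Equiv.Perm (Fin r)) (c : Fin d)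
    (q : ℕ) : ringProd h c (q * d) = (ringProd h c d) ^ q := by
  induction q with
  | zero => simp [ringProd]
  | succ q ih =>
    rw [add_mul, one_mul, ringProd_add, ih]
    have : ((q * d : ℕ) : Fin d) = 0 := by simp [Fin.natCast_eq_zero]
    rw [this, add_zero, pow_succ']

lemma grid_isPeriodicPt_iff {r d' : ℕ} (h : Fin (d'+1) → Equiv.Perm (Fin r)) (j : Fin r)
    (c : Fin (d'+1)) (m : ℕ) :
    IsPeriodicPt (⇑(tauGrid r (d'+1) * gridPerm r (d'+1) h)) m (j, c)
      ↔ (d'+1) ∣ m ∧ IsPeriodicPt ⇑(ringProd h c (d'+1)) (m / (d'+1)) j := by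
  rw [IsPeriodicPt, IsFixedPt, grid_iterate, Prod.mk.injEq]
  constructor
  · rintro ⟨hj, hc⟩
    have hdvd : (d'+1) ∣ m := by
      have h0 : ((m : ℕ) : Fin (d'+1)) = 0 := by
        have h1 : c + (m : Fin (d'+1)) = c + 0 := by rw [add_zero]; exact hc
        exact add_left_cancel h1
      simpa [Fin.natCast_eq_zero] using h0
    refine ⟨hdvd, ?_⟩
    obtain ⟨q, rfl⟩ := hdvd
    rw [Nat.mul_div_cancel_left _ (Nat.succ_pos d')]
    have heq : ringProd h c ((d'+1) * q) = (ringProd h c (d'+1)) ^ q := by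
      rw [mul_comm]; exact ringProd_mul h c q
    rw [heq] at hj
    simpa [IsPeriodicPt, IsFixedPt, ← Equiv.Perm.coe_pow] using hj
  · rintro ⟨⟨q, rfl⟩, hper⟩
    rw [Nat.mul_div_cancel_left _ (Nat.succ_pos d')] at hper
    constructor
    · have heq : ringProd h c ((d'+1) * q) = (ringProd h c (d'+1)) ^ q := by
        rw [mul_comm]; exact ringProd_mul h c q
      rw [heq]
      simpa [IsPeriodicPt, IsFixedPt, ← Equiv.Perm.coe_pow] using hper
    · simp [Fin.natCast_eq_zero, Nat.dvd_mul_right]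

lemma grid_mp {r d' : ℕ} (h : Fin (d'+1) → Equiv.Perm (Fin r)) (j : Fin r) (c : Fin (d'+1)) :
    minimalPeriod (⇑(tauGrid r (d'+1) * gridPerm r (d'+1) h)) (j, c)
      = (d'+1) * minimalPeriod ⇑(ringProd h c (d'+1)) j := by
  set L := minimalPeriod ⇑(ringProd h c (d'+1)) j with hL
  have hper : IsPeriodicPt (⇑(tauGrid r (d'+1) * gridPerm r (d'+1) h)) ((d'+1) * L) (j, c) := by
    rw [grid_isPeriodicPt_iff]
    refine ⟨Dvd.intro _ rfl, ?_⟩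
    rw [Nat.mul_div_cancel_left _ (Nat.succ_pos d')]
    exact isPeriodicPt_minimalPeriod _ _
  apply Nat.dvd_antisymm
  · exact hper.minimalPeriod_dvd
  · have h2 := isPeriodicPt_minimalPeriod (⇑(tauGrid r (d'+1) * gridPerm r (d'+1) h)) (j, c)
    rw [grid_isPeriodicPt_iff] at h2
    obtain ⟨⟨q, hq⟩, hper2⟩ := h2
    rw [hq]
    rw [hq, Nat.mul_div_cancel_left _ (Nat.succ_pos d')] at hper2
    exact mul_dvd_mul_left _ hper2.minimalPeriod_dvd

lemma ringProd_update {r d' : ℕ} (h : Fin (d'+1) → Equiv.Perm (Fin r)) (c : Fin (d'+1))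
    (g : Equiv.Perm (Fin r)) {m : ℕ} (hm1 : 1 ≤ m) (hm2 : m ≤ d'+1) :
    ringProd (Function.update h c g) c m = ringProd h c m * (h c)⁻¹ * g := by
  induction m with
  | zero => omega
  | succ m ih =>
    rcases Nat.eq_or_lt_of_le hm1 with h1 | h2
    · -- m + 1 = 1, i.e. m = 0
      have : m = 0 := by omega
      subst this
      have hz : c + ((0:ℕ) : Fin (d'+1)) = c := by
        rw [Fin.natCast_eq_zero.mpr (dvd_zero _), add_zero]
      show Function.update h c g (c + ((0:ℕ) : Fin (d'+1))) * ringProd (Function.update h c g) c 0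
          = (h (c + ((0:ℕ) : Fin (d'+1))) * ringProd h c 0) * (h c)⁻¹ * g
      rw [hz, Function.update_self]
      show g * 1 = h c * 1 * (h c)⁻¹ * g
      group
    · -- m ≥ 1
      have hm : 1 ≤ m := by omega
      have hne : c + (m : Fin (d'+1)) ≠ c := by
        intro hcc
        have h0 : ((m : ℕ) : Fin (d'+1)) = 0 := by
          have h1 : c + (m : Fin (d'+1)) = c + 0 := by rw [add_zero]; exact hcc
          exact add_left_cancel h1
        rw [Fin.natCast_eq_zero] at h0
        have := Nat.le_of_dvd (by omega) h0
        omega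
      show Function.update h c g (c + (m : Fin (d'+1))) * ringProd (Function.update h c g) c m = _
      rw [Function.update_of_ne hne, ih hm (by omega)]
      show _ = (h (c + (m : Fin (d'+1))) * ringProd h c m) * (h c)⁻¹ * g
      group

-- the self-equivalence

def ringEquiv' {r d' : ℕ} (c : Fin (d'+1)) :
    (Fin (d'+1) → Equiv.Perm (Fin r)) ≃ (Fin (d'+1) → Equiv.Perm (Fin r)) where
  toFun h := Function.update h c (ringProd h c (d'+1))
  invFun h := Function.update h c ((ringProd h c (d'+1) * (h c)⁻¹)⁻¹ * h c)
  left_inv h := by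
    funext i
    dsimp only
    by_cases hi : i = c
    · subst hi
      rw [Function.update_self, ringProd_update h i _ (by omega) (le_refl _)]
      try simp only [Function.update_self]
      group
    · rw [Function.update_of_ne hi, Function.update_of_ne hi]
  right_inv h := by
    funext i
    dsimp only
    by_cases hi : i = c
    · subst hi
      rw [Function.update_self, ringProd_update h i _ (by omega) (le_refl _)]
      try simp only [Function.update_self]
      group
    · rw [Function.update_of_ne hi, Function.update_of_ne hi]

lemma ringEquiv'_apply_c {r d' : ℕ} (c : Fin (d'+1)) (h : Fin (d'+1) → Equiv.Perm (Fin r)) :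
    (ringEquiv' c h) c = ringProd h c (d'+1) := Function.update_self _ _ _

-- the uniformity lemma

lemma sum_ringProd {r d' : ℕ} (c : Fin (d'+1)) (F : Equiv.Perm (Fin r) → ℕ) :
    ∑ h : Fin (d'+1) → Equiv.Perm (Fin r), F (ringProd h c (d'+1))
      = (Fintype.card (Equiv.Perm (Fin r))) ^ d' * ∑ m : Equiv.Perm (Fin r), F m := by
  have step1 : ∑ h : Fin (d'+1) → Equiv.Perm (Fin r), F (ringProd h c (d'+1))
      = ∑ h : Fin (d'+1) → Equiv.Perm (Fin r), F (h c) := by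
    rw [← Equiv.sum_comp (ringEquiv' c) (fun h => F (h c))]
    exact Finset.sum_congr rfl fun h _ => by rw [ringEquiv'_apply_c]
  rw [step1]
  rw [← Equiv.sum_comp (Equiv.piSplitAt c (fun _ => Equiv.Perm (Fin r))).symm
      (fun h => F (h c))]
  have step2 : ∀ p : Equiv.Perm (Fin r) × ({ j : Fin (d'+1) // j ≠ c } → Equiv.Perm (Fin r)),
      ((Equiv.piSplitAt c (fun _ => Equiv.Perm (Fin r))).symm p) c = p.1 := by
    intro p
    simp [Equiv.piSplitAt]
  rw [Finset.sum_congr rfl fun p _ => by rw [step2]]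
  rw [Fintype.sum_prod_type]
  simp only [Finset.sum_const, smul_eq_mul]
  rw [← Finset.mul_sum]
  have hcard : Fintype.card ({ j : Fin (d'+1) // j ≠ c } → Equiv.Perm (Fin r))
      = Fintype.card (Equiv.Perm (Fin r)) ^ d' := by
    rw [Fintype.card_fun, Fintype.card_subtype_compl, Fintype.card_subtype_eq, Fintype.card_fin,
      Nat.add_sub_cancel]
  rw [Finset.card_univ, hcard]

lemma permCongr_iterate {γ α : Type*} (e : γ ≃ α) (m : Equiv.Perm γ) (x : γ) (k : ℕ) :
    (⇑(e.permCongr m))^[k] (e x) = e (m^[k] x) := by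
  induction k with
  | zero => simp
  | succ k ih => rw [Function.iterate_succ_apply', ih, Function.iterate_succ_apply',
      Equiv.permCongr_apply, Equiv.symm_apply_apply]

lemma mp_permCongr {γ α : Type*} (e : γ ≃ α) (m : Equiv.Perm γ) (x : γ) :
    minimalPeriod ⇑(e.permCongr m) (e x) = minimalPeriod ⇑m x := by
  apply Nat.dvd_antisymm
  · apply IsPeriodicPt.minimalPeriod_dvd
    show (⇑(e.permCongr m))^[_] (e x) = e x
    rw [permCongr_iterate, isPeriodicPt_minimalPeriod ⇑m x]
  · apply IsPeriodicPt.minimalPeriod_dvd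
    have h := isPeriodicPt_minimalPeriod ⇑(e.permCongr m) (e x)
    rw [IsPeriodicPt, IsFixedPt, permCongr_iterate] at h
    exact e.injective h

lemma mp_decompose_none {β : Type*} [Fintype β] [DecidableEq β] (e : Equiv.Perm β) :
    minimalPeriod ⇑(Equiv.Perm.decomposeOption.symm ((none : Option β), e)) none = 1 := by
  apply minimalPeriod_eq_one_iff_isFixedPt.2
  show Equiv.Perm.decomposeOption.symm ((none : Option β), e) none = none
  rw [Equiv.Perm.decomposeOption_symm_of_none_apply]
  rfl

lemma mp_decompose_some {β : Type*} [Fintype β] [DecidableEq β] (e : Equiv.Perm β) (a : β) :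
    minimalPeriod ⇑(Equiv.Perm.decomposeOption.symm (some a, e)) none
      = minimalPeriod ⇑e a + 1 := by
  set σ := Equiv.Perm.decomposeOption.symm (some a, e) with hσ
  have happ : ∀ x : Option β, σ x = swap none (some a) (x.map e) := by
    intro x
    rw [hσ]
    simp [Equiv.Perm.decomposeOption, Equiv.Perm.mul_apply]
  set L := minimalPeriod ⇑e a with hLdef
  have hL : 0 < L := perm_mp_pos e a
  have claim1 : ∀ s, s < L → (⇑σ)^[s+1] none = some (e^[s] a) := by
    intro s
    induction s with
    | zero =>
      intro _
      simp [happ]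
    | succ s ih =>
      intro hs
      rw [Function.iterate_succ_apply', ih (by omega), happ]
      have hne : e (e^[s] a) ≠ a := by
        intro hcon
        have : IsPeriodicPt ⇑e (s+1) a := by
          rw [IsPeriodicPt, IsFixedPt, Function.iterate_succ_apply', hcon]
        exact not_isPeriodicPt_of_pos_of_lt_minimalPeriod (by omega) (by omega) this
      rw [Option.map_some]
      rw [swap_apply_of_ne_of_ne (by simp) (by simpa using hne)]
      rw [← Function.iterate_succ_apply' (⇑e) s a]
  have claim2 : IsPeriodicPt ⇑σ (L+1) none := by
    rw [IsPeriodicPt, IsFixedPt]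
    have hL1 : L - 1 < L := by omega
    have : (⇑σ)^[L] none = some (e^[L-1] a) := by
      have := claim1 (L-1) hL1
      rwa [show L - 1 + 1 = L by omega] at this
    rw [Function.iterate_succ_apply', this, happ, Option.map_some]
    have h2 : e ((⇑e)^[L-1] a) = a := by
      have h1 : (⇑e)^[L] a = a := isPeriodicPt_minimalPeriod ⇑e a
      calc e ((⇑e)^[L-1] a) = (⇑e)^[L-1+1] a := (Function.iterate_succ_apply' (⇑e) (L-1) a).symm
        _ = a := by rw [show L-1+1 = L by omega]; exact h1
    rw [h2, swap_apply_right]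
  have hq1 : 0 < minimalPeriod ⇑σ none := claim2.minimalPeriod_pos (by omega)
  have hq2 : minimalPeriod ⇑σ none ≤ L + 1 := claim2.minimalPeriod_le (by omega)
  by_contra hne
  have hlt : minimalPeriod ⇑σ none < L + 1 := by omega
  have := claim1 (minimalPeriod ⇑σ none - 1) (by omega)
  rw [show minimalPeriod ⇑σ none - 1 + 1 = minimalPeriod ⇑σ none by omega] at this
  rw [iterate_minimalPeriod] at this
  simp at this

lemma count_mp_perm (N : ℕ) : ∀ (α : Type) [Fintype α] [DecidableEq α],
    Fintype.card α = N → ∀ (j : α) (ℓ : ℕ), 1 ≤ ℓ → ℓ ≤ N →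
    (univ.filter fun m : Equiv.Perm α => minimalPeriod ⇑m j = ℓ).card = (N - 1).factorial := by
  induction N with
  | zero =>
    intro α _ _ hcard j ℓ _ _
    exact absurd hcard (by have : 0 < Fintype.card α := Fintype.card_pos_iff.2 ⟨j⟩; omega)
  | succ N IH =>
    intro α _ _ hcard j ℓ hℓ1 hℓ2
    set β := {b : α // b ≠ j} with hβ
    have hcardβ : Fintype.card β = N := by
      show Fintype.card {b : α // b ≠ j} = N
      rw [Fintype.card_subtype_compl, Fintype.card_subtype_eq, hcard]
      omega
    set E : Option β ≃ α := Equiv.optionSubtypeNe j with hE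
    have hEnone : E none = j := rfl
    set Φ : Equiv.Perm α ≃ Option β × Equiv.Perm β :=
      (Equiv.permCongr E).symm.trans Equiv.Perm.decomposeOption with hΦ
    have key : ∀ m : Equiv.Perm α,
        minimalPeriod ⇑m j = minimalPeriod ⇑(Equiv.Perm.decomposeOption.symm (Φ m)) none := by
      intro m
      have h1 : Equiv.Perm.decomposeOption.symm (Φ m) = (Equiv.permCongr E).symm m := by
        rw [hΦ]; simp
      rw [h1]
      have h2 := mp_permCongr E ((Equiv.permCongr E).symm m) none
      rw [Equiv.apply_symm_apply, hEnone] at h2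
      exact h2
    have hcards : (univ.filter fun m : Equiv.Perm α => minimalPeriod ⇑m j = ℓ).card
        = (univ.filter fun p : Option β × Equiv.Perm β =>
             minimalPeriod ⇑(Equiv.Perm.decomposeOption.symm p) none = ℓ).card := by
      apply Finset.card_equiv Φ
      intro m
      simp only [mem_filter, mem_univ, true_and]
      rw [key]
    rw [hcards]
    have hsplit : (univ.filter fun p : Option β × Equiv.Perm β =>
             minimalPeriod ⇑(Equiv.Perm.decomposeOption.symm p) none = ℓ).card
        = (univ.filter fun e : Equiv.Perm β =>
             minimalPeriod ⇑(Equiv.Perm.decomposeOption.symm ((none : Option β), e)) none = ℓ).card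
          + ∑ a : β, (univ.filter fun e : Equiv.Perm β =>
             minimalPeriod ⇑(Equiv.Perm.decomposeOption.symm (some a, e)) none = ℓ).card := by
      rw [Finset.card_filter, Fintype.sum_prod_type, Fintype.sum_option]
      congr 1
      · rw [Finset.card_filter]
      · exact Finset.sum_congr rfl fun a _ => (Finset.card_filter _ _).symm
    rw [hsplit]
    rcases Nat.eq_or_lt_of_le hℓ1 with h1 | h2
    · -- ℓ = 1
      have hfirst : (univ.filter fun e : Equiv.Perm β =>
          minimalPeriod ⇑(Equiv.Perm.decomposeOption.symm ((none : Option β), e)) none = ℓ)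
          = univ := by
        apply Finset.filter_true_of_mem
        intro e _
        rw [mp_decompose_none, h1]
      have hsecond : ∀ a : β, (univ.filter fun e : Equiv.Perm β =>
          minimalPeriod ⇑(Equiv.Perm.decomposeOption.symm (some a, e)) none = ℓ) = ∅ := by
        intro a
        apply Finset.filter_false_of_mem
        intro e _
        rw [mp_decompose_some]
        have := perm_mp_pos e a
        omega
      rw [hfirst]
      rw [Finset.sum_congr rfl fun a _ => by rw [hsecond a]]
      simp only [Finset.card_empty, Finset.sum_const_zero, add_zero]
      rw [Finset.card_univ, Fintype.card_perm, hcardβ, Nat.succ_sub_one]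
    · -- ℓ ≥ 2
      have hN : 1 ≤ N := by omega
      have hfirst : (univ.filter fun e : Equiv.Perm β =>
          minimalPeriod ⇑(Equiv.Perm.decomposeOption.symm ((none : Option β), e)) none = ℓ)
          = ∅ := by
        apply Finset.filter_false_of_mem
        intro e _
        rw [mp_decompose_none]
        omega
      have hsecond : ∀ a : β, (univ.filter fun e : Equiv.Perm β =>
          minimalPeriod ⇑(Equiv.Perm.decomposeOption.symm (some a, e)) none = ℓ).card
          = (N - 1).factorial := by
        intro a
        have : (univ.filter fun e : Equiv.Perm β =>
            minimalPeriod ⇑(Equiv.Perm.decomposeOption.symm (some a, e)) none = ℓ)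
            = (univ.filter fun e : Equiv.Perm β => minimalPeriod ⇑e a = ℓ - 1) := by
          apply Finset.filter_congr
          intro e _
          rw [mp_decompose_some]
          constructor <;> intro h <;> omega
        rw [this]
        exact IH β hcardβ a (ℓ - 1) (by omega) (by omega)
      rw [hfirst]
      rw [Finset.sum_congr rfl fun a _ => hsecond a]
      simp only [Finset.card_empty, zero_add, Finset.sum_const, smul_eq_mul, Finset.card_univ]
      rw [hcardβ, Nat.succ_sub_one]
      exact Nat.mul_factorial_pred (by omega)

lemma sigma_iterate {ι : Type*} {κ : ι → Type*} (f : ∀ i, Equiv.Perm (κ i)) (m : ℕ) (i : ι)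
    (x : κ i) : (⇑(Equiv.sigmaCongrRight f))^[m] ⟨i, x⟩ = ⟨i, (⇑(f i))^[m] x⟩ := by
  induction m with
  | zero => rfl
  | succ m ih => rw [Function.iterate_succ_apply', ih, Function.iterate_succ_apply']; rfl

lemma sigma_mp {ι : Type*} {κ : ι → Type*} (f : ∀ i, Equiv.Perm (κ i)) (i : ι) (x : κ i) :
    minimalPeriod ⇑(Equiv.sigmaCongrRight f) ⟨i, x⟩ = minimalPeriod ⇑(f i) x := by
  apply Nat.dvd_antisymm
  · apply IsPeriodicPt.minimalPeriod_dvd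
    show (⇑(Equiv.sigmaCongrRight f))^[_] ⟨i, x⟩ = ⟨i, x⟩
    rw [sigma_iterate, isPeriodicPt_minimalPeriod ⇑(f i) x]
  · apply IsPeriodicPt.minimalPeriod_dvd
    have h := isPeriodicPt_minimalPeriod ⇑(Equiv.sigmaCongrRight f) ⟨i, x⟩
    rw [IsPeriodicPt, IsFixedPt, sigma_iterate] at h
    exact eq_of_heq (Sigma.mk.inj_iff.1 h).2

lemma pcount_sigma {n : ℕ} {κ : Fin n → Type*} [∀ i, Fintype (κ i)] [∀ i, DecidableEq (κ i)]
    (f : ∀ i, Equiv.Perm (κ i)) (k : ℕ) :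
    pcount (Equiv.sigmaCongrRight f) k = ∑ i, pcount (f i) k := by
  unfold pcount
  rw [Finset.card_filter, ← Finset.univ_sigma_univ, Finset.sum_sigma]
  exact Finset.sum_congr rfl fun i _ => by
    rw [Finset.card_filter]
    exact Finset.sum_congr rfl fun x _ => by rw [sigma_mp]

lemma sum_pi_eval {ι : Type*} [DecidableEq ι] [Fintype ι] {κ : ι → Type*} [∀ i, Fintype (κ i)]
    (i : ι) (G : κ i → ℕ) :
    ∑ h : (∀ i', κ i'), G (h i)
      = Fintype.card (∀ i' : {x // x ≠ i}, κ i') * ∑ a : κ i, G a := by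
  rw [← Equiv.sum_comp (Equiv.piSplitAt i κ).symm (fun h => G (h i))]
  have step : ∀ p : κ i × (∀ i' : {x // x ≠ i}, κ i'),
      ((Equiv.piSplitAt i κ).symm p) i = p.1 := by
    intro p; simp [Equiv.piSplitAt]
  rw [Finset.sum_congr rfl fun p _ => by rw [step]]
  rw [Fintype.sum_prod_type]
  simp only [Finset.sum_const, smul_eq_mul]
  rw [← Finset.mul_sum, Finset.card_univ]

lemma card_pi_split {ι : Type*} [DecidableEq ι] [Fintype ι] {κ : ι → Type*} [∀ i, Fintype (κ i)]
    (i : ι) : Fintype.card (∀ i', κ i')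
      = Fintype.card (∀ i' : {x // x ≠ i}, κ i') * Fintype.card (κ i) := by
  rw [Fintype.card_congr (Equiv.piSplitAt i κ), Fintype.card_prod, mul_comm]

lemma count_mp_perm_fin (r : ℕ) (j : Fin r) (ℓ : ℕ) (hℓ : 1 ≤ ℓ) :
    (univ.filter fun m : Equiv.Perm (Fin r) => minimalPeriod ⇑m j = ℓ).card
      = if ℓ ≤ r then (r - 1).factorial else 0 := by
  split_ifs with hcase
  · exact count_mp_perm r (Fin r) (Fintype.card_fin r) j ℓ hℓ hcase
  · rw [Finset.card_eq_zero, Finset.filter_eq_empty_iff]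
    intro m _
    have := mp_le_card m j
    rw [Fintype.card_fin] at this
    omega

lemma block_sum (r d k : ℕ) (hk : 1 ≤ k) :
    ∑ h : Fin d → Equiv.Perm (Fin r), pcount (tauGrid r d * gridPerm r d h) k
      = if d ∣ k ∧ k ≤ d * r then Fintype.card (Fin d → Equiv.Perm (Fin r)) * d else 0 := by
  rcases d with _ | d'
  · -- d = 0
    have hc : ¬ ((0 : ℕ) ∣ k ∧ k ≤ 0 * r) := by
      rintro ⟨hd, _⟩; omega
    rw [if_neg hc]
    apply Finset.sum_eq_zero
    intro h _
    unfold pcount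
    rw [Finset.card_eq_zero, Finset.filter_eq_empty_iff]
    rintro ⟨_, ⟨_, hlt⟩⟩
    omega
  · -- d = d' + 1
    have hexp : ∀ h : Fin (d'+1) → Equiv.Perm (Fin r), pcount (tauGrid r (d'+1) * gridPerm r (d'+1) h) k
        = ∑ p : Fin r × Fin (d'+1),
            if (d'+1) * minimalPeriod ⇑(ringProd h p.2 (d'+1)) p.1 = k then 1 else 0 := by
      intro h
      unfold pcount
      rw [Finset.card_filter]
      exact Finset.sum_congr rfl fun p _ => by
        rcases p with ⟨j, c⟩
        rw [grid_mp]
    rw [Finset.sum_congr rfl fun h _ => hexp h]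
    rw [Finset.sum_comm]
    have hswap : ∀ p : Fin r × Fin (d'+1),
        (∑ h : Fin (d'+1) → Equiv.Perm (Fin r),
          if (d'+1) * minimalPeriod ⇑(ringProd h p.2 (d'+1)) p.1 = k then 1 else 0)
        = (Fintype.card (Equiv.Perm (Fin r))) ^ d' *
            ∑ m : Equiv.Perm (Fin r), if (d'+1) * minimalPeriod ⇑m p.1 = k then 1 else 0 := by
      intro p
      exact sum_ringProd p.2 (fun m => if (d'+1) * minimalPeriod ⇑m p.1 = k then 1 else 0)
    rw [Finset.sum_congr rfl fun p _ => hswap p]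
    by_cases hdvd : (d'+1) ∣ k
    · obtain ⟨ℓ, rfl⟩ := hdvd
      have hℓ1 : 1 ≤ ℓ := by
        rcases Nat.eq_zero_or_pos ℓ with h0 | h1
        · subst h0; omega
        · exact h1
      have hcond : ∀ m : Equiv.Perm (Fin r), ∀ j : Fin r,
          ((d'+1) * minimalPeriod ⇑m j = (d'+1) * ℓ ↔ minimalPeriod ⇑m j = ℓ) := by
        intro m j
        constructor
        · intro hh; exact Nat.eq_of_mul_eq_mul_left (by omega) hh
        · intro hh; rw [hh]
      have hinner : ∀ j : Fin r,
          (∑ m : Equiv.Perm (Fin r), if (d'+1) * minimalPeriod ⇑m j = (d'+1) * ℓ then 1 else 0)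
          = if ℓ ≤ r then (r - 1).factorial else 0 := by
        intro j
        rw [← count_mp_perm_fin r j ℓ hℓ1, Finset.card_filter]
        exact Finset.sum_congr rfl fun m _ => by rw [if_congr (hcond m j) rfl rfl]
      rw [Finset.sum_congr rfl fun p _ => by rw [hinner p.1]]
      by_cases hle : ℓ ≤ r
      · have hcond2 : (d'+1) ∣ (d'+1) * ℓ ∧ (d'+1) * ℓ ≤ (d'+1) * r :=
          ⟨Dvd.intro _ rfl, Nat.mul_le_mul_left _ hle⟩
        rw [if_pos hle, if_pos hcond2]
        rw [Finset.sum_const, Finset.card_univ, Fintype.card_prod, Fintype.card_fin,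
          Fintype.card_fin, smul_eq_mul]
        rw [Fintype.card_fun, Fintype.card_fin]
        have hr : 1 ≤ r := le_trans hℓ1 hle
        have hfact : Fintype.card (Equiv.Perm (Fin r)) = r * (r-1).factorial := by
          rw [Fintype.card_perm, Fintype.card_fin, ← Nat.mul_factorial_pred (by omega)]
        rw [hfact]
        ring
      · have hcond2 : ¬ ((d'+1) ∣ (d'+1) * ℓ ∧ (d'+1) * ℓ ≤ (d'+1) * r) := by
          rintro ⟨_, hcon⟩
          have := Nat.le_of_mul_le_mul_left hcon (by omega)
          omega
        rw [if_neg hle, if_neg hcond2]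
        simp
    · have hzero : ∀ j : Fin r,
          (∑ m : Equiv.Perm (Fin r), if (d'+1) * minimalPeriod ⇑m j = k then 1 else 0) = 0 := by
        intro j
        apply Finset.sum_eq_zero
        intro m _
        rw [if_neg]
        intro hcon
        exact hdvd ⟨_, hcon.symm⟩
      rw [Finset.sum_congr rfl fun p _ => by rw [hzero p.1]]
      rw [if_neg (by rintro ⟨hcon, _⟩; exact hdvd hcon)]
      simp

lemma tau_mul_h {n : ℕ} {r d : Fin n → ℕ} (h : BigH n r d) :
    tauBig n r d * hPermBig h
      = Equiv.sigmaCongrRight fun i => tauGrid (r i) (d i) * gridPerm (r i) (d i) (h i) := by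
  ext ⟨i, x⟩ : 1
  rfl

end Aux

/-- The expected number of `k`-cycles of a uniformly random element of the coset `τH`
equals `(1/k)·∑_{i : dᵢ ∣ k, dᵢrᵢ ≥ k} dᵢ`. -/
theorem stmt8 (n : ℕ) (r d : Fin n → ℕ) (k : ℕ) (hk : 1 ≤ k) :
    ((Fintype.card (BigH n r d) : ℚ))⁻¹ *
        ∑ h : BigH n r d, (cycleCount (tauBig n r d * hPermBig h) k : ℚ)
      = (k : ℚ)⁻¹ *
          ∑ i ∈ Finset.univ.filter (fun i => d i ∣ k ∧ k ≤ d i * r i), (d i : ℚ) := by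

  -- ℕ-level identity
  have key : k * ∑ h : BigH n r d, cycleCount (tauBig n r d * hPermBig h) k
      = Fintype.card (BigH n r d)
          * ∑ i ∈ Finset.univ.filter (fun i => d i ∣ k ∧ k ≤ d i * r i), d i := by
    rw [Finset.mul_sum]
    have h1 : ∀ h : BigH n r d, k * cycleCount (tauBig n r d * hPermBig h) k
        = ∑ i, pcount (tauGrid (r i) (d i) * gridPerm (r i) (d i) (h i)) k := by
      intro h
      rw [← pcount_eq_mul_cycleCount _ _ hk, tau_mul_h, pcount_sigma]
    rw [Finset.sum_congr rfl fun h _ => h1 h]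
    rw [Finset.sum_comm]
    have h2 : ∀ i : Fin n,
        (∑ h : BigH n r d, pcount (tauGrid (r i) (d i) * gridPerm (r i) (d i) (h i)) k)
        = if d i ∣ k ∧ k ≤ d i * r i then Fintype.card (BigH n r d) * d i else 0 := by
      intro i
      rw [sum_pi_eval (κ := fun i' => (Fin (d i') → Equiv.Perm (Fin (r i')))) i (fun a => pcount (tauGrid (r i) (d i) * gridPerm (r i) (d i) a) k)]
      rw [block_sum _ _ _ hk]
      rw [mul_ite, mul_zero, ← mul_assoc, ← card_pi_split (κ := fun i' => (Fin (d i') → Equiv.Perm (Fin (r i')))) i]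
    rw [Finset.sum_congr rfl fun i _ => h2 i]
    rw [← Finset.sum_filter, Finset.mul_sum]
  -- cast to ℚ
  have hH : (0 : ℚ) < (Fintype.card (BigH n r d) : ℚ) := by
    exact_mod_cast Fintype.card_pos
  have hkQ : (0 : ℚ) < (k : ℚ) := by exact_mod_cast hk
  have keyQ : (k : ℚ) * ∑ h : BigH n r d, (cycleCount (tauBig n r d * hPermBig h) k : ℚ)
      = (Fintype.card (BigH n r d) : ℚ)
          * ∑ i ∈ Finset.univ.filter (fun i => d i ∣ k ∧ k ≤ d i * r i), (d i : ℚ) := by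
    exact_mod_cast congrArg (fun x : ℕ => (x : ℚ)) key
  set S : ℚ := ∑ h : BigH n r d, (cycleCount (tauBig n r d * hPermBig h) k : ℚ) with hS
  set D : ℚ := ∑ i ∈ Finset.univ.filter (fun i => d i ∣ k ∧ k ≤ d i * r i), (d i : ℚ) with hD
  set H : ℚ := (Fintype.card (BigH n r d) : ℚ) with hHdef
  have hSeq : S = (k : ℚ)⁻¹ * (H * D) := by
    rw [← keyQ, inv_mul_cancel_left₀ hkQ.ne']
  rw [hSeq, show H⁻¹ * ((k : ℚ)⁻¹ * (H * D)) = (H⁻¹ * H) * ((k : ℚ)⁻¹ * D) by ring,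
    inv_mul_cancel₀ hH.ne', one_mul]
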